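/- Let M be a matroid on E and A ⊆ E. A set S belongs to the cusp of A computed in the dual matroid M* if and only if its complement E∖S belongs to the cusp of E∖A computed in M. -/

import Mathlib

open Set

variable {α : Type*}

/-- The (natural-number valued) rank of a set `X` in a matroid `M`:
the maximum cardinality of an independent subset of `X`. -/
noncomputable def Matroid.nrk (M : Matroid α) (X : Set α) : ℕ :=
  sSup (Set.ncard '' {I | M.Indep I ∧ I ⊆ X})

/-- The rank of the matroid `M`. -/
noncomputable def Matroid.nRank (M : Matroid α) : ℕ := M.nrk M.E

/-- The cusp of a subset `A` in a matroid `M` of rank `k`: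
all `k`-element subsets `S` of the ground set with `|S ∩ A| ≥ rk A + 1`. -/
def Matroid.cusp (M : Matroid α) (A : Set α) : Set (Set α) :=
  {S | S ⊆ M.E ∧ S.ncard = M.nRank ∧ M.nrk A + 1 ≤ (S ∩ A).ncard}

/-- A subset `A` of a matroid `M` is stressed if both the restriction `M | A`
and the contraction `M / A` are uniform matroids; for a finite matroid this is
equivalent to the rank functions of the restriction and of the contraction being
those of uniform matroids. -/
def Matroid.StressedSubset (M : Matroid α) (A : Set α) : Prop :=
  (∀ S ⊆ A, M.nrk S = min S.ncard (M.nrk A)) ∧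
  (∀ Y ⊆ M.E \ A, M.nrk (A ∪ Y) = M.nrk A + min Y.ncard (M.nRank - M.nrk A))

lemma ncard_diff_add_inter {s t : Set α} (ht : t.Finite) :
    (t \ s).ncard + (t ∩ s).ncard = t.ncard := by
  rw [← diff_self_inter, ncard_diff_add_ncard_of_subset inter_subset_left ht]

lemma nrk_eq_of_basis {M : Matroid α} (hfin : M.E.Finite) {J X : Set α}
    (hJ : M.IsBasis J X) : M.nrk X = J.ncard := by
  have hXE : X ⊆ M.E := hJ.subset_ground
  apply le_antisymm
  · refine csSup_le ⟨J.ncard, ⟨J, ⟨hJ.indep, hJ.subset⟩, rfl⟩⟩ ?_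
    rintro n ⟨I, ⟨hI, hIX⟩, rfl⟩
    obtain ⟨J', hJ', hIJ'⟩ := hI.subset_isBasis_of_subset hIX hXE
    have h1 : I.ncard ≤ J'.ncard :=
      ncard_le_ncard hIJ' (hfin.subset hJ'.left_subset_ground)
    have h2 : J'.encard = J.encard := hJ'.encard_eq_encard hJ
    have : J'.ncard = J.ncard := by rw [ncard_def, h2, ← ncard_def]
    omega
  · apply le_csSup
    · refine ⟨J.ncard, ?_⟩
      rintro n ⟨I, ⟨hI, hIX⟩, rfl⟩
      obtain ⟨J', hJ', hIJ'⟩ := hI.subset_isBasis_of_subset hIX hXE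
      have h1 : I.ncard ≤ J'.ncard :=
        ncard_le_ncard hIJ' (hfin.subset hJ'.left_subset_ground)
      have h2 : J'.ncard = J.ncard := by
        rw [ncard_def, hJ'.encard_eq_encard hJ, ← ncard_def]
      omega
    · exact ⟨J, ⟨hJ.indep, hJ.subset⟩, rfl⟩

lemma indep_ncard_le_nrk {M : Matroid α} (hfin : M.E.Finite) {I X : Set α}
    (hI : M.Indep I) (hIX : I ⊆ X) (hXE : X ⊆ M.E) : I.ncard ≤ M.nrk X := by
  obtain ⟨J, hJ⟩ := M.exists_isBasis X hXE
  rw [nrk_eq_of_basis hfin hJ]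
  obtain ⟨J', hJ', hIJ'⟩ := hI.subset_isBasis_of_subset hIX hXE
  have h2 : J'.ncard = J.ncard := by
    rw [ncard_def, hJ'.encard_eq_encard hJ, ← ncard_def]
  have h1 : I.ncard ≤ J'.ncard :=
    ncard_le_ncard hIJ' (hfin.subset hJ'.left_subset_ground)
  omega

lemma nRank_eq_of_base {M : Matroid α} (hfin : M.E.Finite) {B : Set α}
    (hB : M.IsBase B) : M.nRank = B.ncard :=
  nrk_eq_of_basis hfin (Matroid.isBasis_ground_iff.mpr hB)

/-- dual rank identity -/
lemma dual_nrk_add {M : Matroid α} (hfin : M.E.Finite) {A : Set α} (hA : A ⊆ M.E) :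
    M✶.nrk A + M.nRank = M.nrk (M.E \ A) + A.ncard := by
  obtain ⟨I, hI⟩ := M.exists_isBasis (M.E \ A) diff_subset
  obtain ⟨B, hB, hIB⟩ := hI.indep.exists_isBase_superset
  have hBE : B ⊆ M.E := hB.subset_ground
  have hfinA : A.Finite := hfin.subset hA
  have hfinB : B.Finite := hfin.subset hBE
  -- B \ A = I
  have hBA : B \ A = I := by
    refine (hI.eq_of_subset_indep (hB.indep.subset diff_subset)
      (subset_diff.mpr ⟨hIB, ?_⟩) (diff_subset_diff_left hBE)).symm
    exact (subset_diff.mp hI.subset).2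
  -- A \ B is a basis of A in the dual
  have hdualindep : M✶.Indep (A \ B) := by
    rw [Matroid.dual_indep_iff_exists (diff_subset.trans hA)]
    exact ⟨B, hB, disjoint_sdiff_left⟩
  have hbasis : M✶.IsBasis (A \ B) A := by
    rw [Matroid.isBasis_iff (by rwa [Matroid.dual_ground])]
    refine ⟨hdualindep, diff_subset, fun J hJ hsub hJA => ?_⟩
    refine eq_of_subset_of_ncard_le hsub ?_ (hfinA.subset hJA)
    -- J is disjoint from some base B'
    obtain ⟨B', hB', hdisj⟩ := (Matroid.dual_indep_iff_exists (hJA.trans hA)).mp hJ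
    have hB'E : B' ⊆ M.E := hB'.subset_ground
    have hJAB' : J ⊆ A \ B' := subset_diff.mpr ⟨hJA, hdisj⟩
    have h1 : J.ncard ≤ (A \ B').ncard := ncard_le_ncard hJAB' hfinA.diff
    -- |B' \ A| ≤ |I|
    have h2 : (B' \ A).ncard ≤ I.ncard := by
      rw [← nrk_eq_of_basis hfin hI]
      exact indep_ncard_le_nrk hfin (hB'.indep.subset diff_subset)
        (diff_subset_diff_left hB'E) diff_subset
    have hcardBB' : B.ncard = B'.ncard := hB.ncard_eq_ncard_of_isBase hB'
    -- cardinal bookkeeping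
    have e1 : (B \ A).ncard + (B ∩ A).ncard = B.ncard := by
      exact ncard_diff_add_inter hfinB
    have e2 : (B' \ A).ncard + (B' ∩ A).ncard = B'.ncard := by
      exact ncard_diff_add_inter (hfin.subset hB'E)
    have e3 : (A \ B).ncard + (A ∩ B).ncard = A.ncard := by
      exact ncard_diff_add_inter hfinA
    have e4 : (A \ B').ncard + (A ∩ B').ncard = A.ncard := by
      exact ncard_diff_add_inter hfinA
    have e5 : (B ∩ A).ncard = (A ∩ B).ncard := by rw [inter_comm]
    have e6 : (B' ∩ A).ncard = (A ∩ B').ncard := by rw [inter_comm]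
    have e7 : (B \ A).ncard = I.ncard := by rw [hBA]
    omega
  have key : M✶.nrk A = (A \ B).ncard := nrk_eq_of_basis (by simpa using hfin) hbasis
  have e1 : (B \ A).ncard + (B ∩ A).ncard = B.ncard := by
    exact ncard_diff_add_inter hfinB
  have e3 : (A \ B).ncard + (A ∩ B).ncard = A.ncard := by
    exact ncard_diff_add_inter hfinA
  have e5 : (B ∩ A).ncard = (A ∩ B).ncard := by rw [inter_comm]
  have e7 : (B \ A).ncard = I.ncard := by rw [hBA]
  rw [key, nRank_eq_of_base hfin hB, nrk_eq_of_basis hfin hI]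
  omega

lemma dual_nRank_add {M : Matroid α} (hfin : M.E.Finite) :
    M✶.nRank + M.nRank = M.E.ncard := by
  obtain ⟨B, hB⟩ := M.exists_isBase
  have h1 : M✶.nRank = (M.E \ B).ncard :=
    nRank_eq_of_base (by simpa using hfin) hB.compl_isBase_dual
  rw [h1, nRank_eq_of_base hfin hB, ncard_diff_add_ncard_of_subset hB.subset_ground hfin]

/-- `S` belongs to the cusp of `A` computed in the dual matroid `M✶`
if and only if `E ∖ S` belongs to the cusp of `E ∖ A` computed in `M`. -/
theorem mem_cusp_dual_iff (M : Matroid α) (hfin : M.E.Finite) {A S : Set α}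
    (hA : A ⊆ M.E) (hS : S ⊆ M.E) :
    S ∈ M✶.cusp A ↔ M.E \ S ∈ M.cusp (M.E \ A) := by
  have h5 := dual_nRank_add hfin
  have h4 := dual_nrk_add hfin hA
  have hSA : S ∪ A ⊆ M.E := union_subset hS hA
  have c1 : (S ∩ A).ncard + (S ∪ A).ncard = S.ncard + A.ncard :=
    ncard_inter_add_ncard_union S A (hfin.subset hS) (hfin.subset hA)
  have c2 : (M.E \ (S ∪ A)).ncard + (S ∪ A).ncard = M.E.ncard :=
    ncard_diff_add_ncard_of_subset hSA hfin
  have c3 : (M.E \ S).ncard + S.ncard = M.E.ncard :=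
    ncard_diff_add_ncard_of_subset hS hfin
  simp only [Matroid.cusp, mem_setOf_eq, Matroid.dual_ground, diff_inter_diff]
  constructor
  · rintro ⟨-, h2, h3⟩
    exact ⟨diff_subset, by omega, by omega⟩
  · rintro ⟨-, h2, h3⟩
    exact ⟨hS, by omega, by omega⟩
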